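/- Let R be a Noetherian commutative ring whose integral closure in its total ring of fractions is finite as an R-module, let t ∈ R be a non-zero-divisor, and assume that R is integrally closed in the localization R[t⁻¹]. Then the ring R/(t) has no embedded primes: every associated prime of the R-module R/(t) is a minimal prime among the prime ideals of R containing t. (Lemma 2.5 of the paper: R/(t) satisfies Serre's condition S1.) -/

import Mathlib

set_option synthInstance.maxHeartbeats 1000000

/-- Determinant-trick variant: if `y : A` multiplies a finitely generated `R`-submodule
`N` of `A` into itself, and `N` contains a unit of `A`, then `y` is integral over `R`. -/
theorem isIntegral_of_mul_mem_fg_aux {R A : Type*} [CommRing R] [CommRing A] [Algebra R A]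
    (N : Submodule R A) (hN : N.FG) (y : A) (hy : ∀ n ∈ N, y * n ∈ N)
    (u : A) (hu : IsUnit u) (huN : u ∈ N) : IsIntegral R y := by
  haveI : Module.Finite R N := ⟨(Submodule.fg_top _).mpr hN⟩
  let A' : Subalgebra R A :=
    { carrier := { x | ∀ n ∈ N, x * n ∈ N }
      mul_mem' := fun {a b} ha hb n hn => (mul_assoc a b n) ▸ ha _ (hb _ hn)
      one_mem' := fun n hn => (one_mul n).symm ▸ hn
      add_mem' := fun {a b} ha hb n hn => (add_mul a b n).symm ▸ N.add_mem (ha _ hn) (hb _ hn)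
      zero_mem' := fun n _hn => (zero_mul n).symm ▸ N.zero_mem
      algebraMap_mem' := fun r n hn => by
        rw [← Algebra.smul_def]; exact N.smul_mem r hn }
  have hsmul : ∀ (x : A') (n : A), x • n = (x : A) * n := fun x n => rfl
  let f : A' →ₐ[R] Module.End R N :=
    AlgHom.ofLinearMap
      { toFun := fun x => (DistribMulAction.toLinearMap R A (x : A')).restrict
          (fun n hn => by
            show (x : A) • n ∈ N
            rw [smul_eq_mul]; exact x.2 n hn)
        map_add' := fun x y => LinearMap.ext fun n => Subtype.ext <| add_smul (x : A) (y : A) (n : A)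
        map_smul' := fun r s => LinearMap.ext fun n => Subtype.ext <| smul_assoc r (s : A) (n : A) }
      (by
        ext n
        show ((1 : A') : A) • (n : A) = (n : A)
        rw [OneMemClass.coe_one, one_smul])
      (by
        intros x y
        ext n
        show ((x * y : A') : A) • (n : A) = (x : A) • ((y : A) • (n : A))
        rw [MulMemClass.coe_mul, mul_smul])
  have hyA' : y ∈ A' := hy
  obtain ⟨P, hPm, hP⟩ := (Module.End.isIntegral (R := R) (M := N)).isIntegral (f ⟨y, hyA'⟩)
  refine ⟨P, hPm, ?_⟩
  have h2 : f (Polynomial.aeval (⟨y, hyA'⟩ : A') P) = 0 := by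
    rw [← Polynomial.aeval_algHom_apply]; exact hP
  have h3 := LinearMap.congr_fun h2 ⟨u, huN⟩
  have h4 : ((Polynomial.aeval (⟨y, hyA'⟩ : A') P : A') : A) * u = 0 := congr_arg Subtype.val h3
  have h5 : ((Polynomial.aeval (⟨y, hyA'⟩ : A') P : A') : A) = Polynomial.aeval y P :=
    (Polynomial.aeval_algHom_apply A'.val (⟨y, hyA'⟩ : A') P).symm
  rw [h5] at h4
  have h6 := congr_arg (· * (↑hu.unit⁻¹ : A)) h4
  simp only [mul_assoc, hu.mul_val_inv, mul_one, zero_mul] at h6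
  exact h6

/-- Let `R` be a Noetherian commutative ring whose integral closure in its total ring
of fractions is finite as an `R`-module, let `t ∈ R` be a non-zero-divisor, and assume
`R` is integrally closed in `R[t⁻¹]`.  Then `R/(t)` has no embedded primes: every
associated prime of `R/(t)` is minimal among primes containing `t`. -/
theorem no_embedded_primes_of_integrally_closed
    (R : Type*) [CommRing R] [IsNoetherianRing R]
    (hfin : Module.Finite R (integralClosure R (FractionRing R)))
    (t : R) (ht : t ∈ nonZeroDivisors R)
    (hic : ∀ x : Localization.Away t, IsIntegral R x →
      x ∈ (algebraMap R (Localization.Away t)).range) :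
    ∀ p ∈ associatedPrimes R (R ⧸ Ideal.span {t}), p ∈ (Ideal.span {t}).minimalPrimes := by
  intro p hp
  obtain ⟨hprime, m, hm⟩ := isAssociatedPrime_iff.mp hp
  obtain ⟨x, rfl⟩ := Ideal.Quotient.mk_surjective m
  -- membership characterization of p
  have hmem : ∀ c : R, c ∈ p ↔ ∃ d, c * x = t * d := by
    intro c
    have hsm : c • (Ideal.Quotient.mk (Ideal.span {t}) x)
        = Ideal.Quotient.mk (Ideal.span {t}) (c * x) :=
      (Submodule.Quotient.mk_smul (Ideal.span {t}) c x).symm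
    rw [hm, Submodule.mem_colon_singleton, Submodule.mem_bot, hsm,
      Ideal.Quotient.eq_zero_iff_mem, Ideal.mem_span_singleton]
    exact Iff.rfl
  have htp : t ∈ p := (hmem t).mpr ⟨x, by ring⟩
  have hx : ¬ ∃ d, x = t * d := by
    rintro ⟨d, hd⟩
    exact hprime.ne_top (Ideal.eq_top_iff_one p |>.mpr ((hmem 1).mpr ⟨d, by rw [one_mul, hd]⟩))
  by_cases hcase : ∀ c ∈ p, ∀ d, c * x = t * d → d ∈ p
  · -- Case 1: x/t is integral over R, contradicting x ∉ (t).
    exfalso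
    set A := Localization.Away t
    set f := algebraMap R A with hf
    have htu : IsUnit (f t) :=
      IsLocalization.map_units A (⟨t, Submonoid.mem_powers t⟩ : Submonoid.powers t)
    set y : A := IsLocalization.mk' A x (⟨t, Submonoid.mem_powers t⟩ : Submonoid.powers t)
      with hy
    have hyt : y * f t = f x := IsLocalization.mk'_spec A x _
    set N : Submodule R A := Submodule.map (Algebra.linearMap R A) (p : Submodule R R) with hN
    have hNfg : N.FG := (IsNoetherian.noetherian (p : Submodule R R)).map _
    have hmul : ∀ n ∈ N, y * n ∈ N := by
      rintro n hn
      obtain ⟨c, hc, rfl⟩ := hn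
      obtain ⟨d, hd⟩ := (hmem c).mp hc
      have hdp : d ∈ p := hcase c hc d hd
      have key : y * (Algebra.linearMap R A) c = (Algebra.linearMap R A) d := by
        apply htu.mul_left_cancel
        show f t * (y * f c) = f t * f d
        rw [← mul_assoc, mul_comm (f t) y, hyt, ← map_mul, ← map_mul, mul_comm x c, hd]
      rw [key]
      exact ⟨d, hdp, rfl⟩
    have hint : IsIntegral R y :=
      isIntegral_of_mul_mem_fg_aux N hNfg y hmul (f t) htu ⟨t, htp, rfl⟩
    obtain ⟨r, hr⟩ := hic y hint
    apply hx
    refine ⟨r, ?_⟩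
    have hinj : Function.Injective f := by
      apply IsLocalization.injective A (M := Submonoid.powers t)
      rintro z ⟨n, rfl⟩
      exact pow_mem ht n
    apply hinj
    rw [← hyt, ← hr, ← map_mul, mul_comm r t]
  · -- Case 2: p is minimal over (t).
    push_neg at hcase
    obtain ⟨a, hap, b, hab, hbp⟩ := hcase
    -- key: b • p ⊆ (a)
    have hcancel : ∀ u v : R, t * u = t * v → u = v := fun u v h =>
      (mul_cancel_left_mem_nonZeroDivisors ht).mp h
    have key : ∀ c ∈ p, ∃ e, c * b = a * e := by
      intro c hc
      obtain ⟨d, hd⟩ := (hmem c).mp hc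
      refine ⟨d, hcancel _ _ ?_⟩
      calc t * (c * b) = c * (t * b) := by ring
        _ = c * (a * x) := by rw [hab]
        _ = a * (c * x) := by ring
        _ = a * (t * d) := by rw [hd]
        _ = t * (a * d) := by ring
    constructor
    · exact ⟨hprime, Ideal.span_le.mpr (by simpa using htp)⟩
    · rintro q ⟨hqprime, hqle⟩ hqp
      have htq : t ∈ q := hqle (Ideal.mem_span_singleton_self t)
      have hbq : b ∉ q := fun h => hbp (hqp h)
      by_cases haq : a ∈ q
      · -- then p ⊆ q
        intro c hc
        obtain ⟨e, he⟩ := key c hc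
        have : c * b ∈ q := he ▸ Ideal.mul_mem_right _ _ haq
        exact (hqprime.mem_or_mem this).resolve_right hbq
      · -- impossible: t would be in every power of p locally
        exfalso
        have seq : ∀ n : ℕ, ∃ z, z ∈ q ∧ t * b ^ (n + 1) = a ^ (n + 1) * z := by
          intro n
          induction n with
          | zero =>
            refine ⟨x, ?_, by rw [pow_one, pow_one, ← hab]⟩
            have : a * x ∈ q := by rw [hab]; exact Ideal.mul_mem_right _ _ htq
            exact (hqprime.mem_or_mem this).resolve_left haq
          | succ n ih =>
            obtain ⟨z, hzq, hz⟩ := ih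
            obtain ⟨w, hw⟩ := key z (hqp hzq)
            have hwq : w ∈ q := by
              have : a * w ∈ q := hw ▸ Ideal.mul_mem_right _ _ hzq
              exact (hqprime.mem_or_mem this).resolve_left haq
            refine ⟨w, hwq, ?_⟩
            calc t * b ^ (n + 2) = (t * b ^ (n + 1)) * b := by ring
              _ = a ^ (n + 1) * (z * b) := by rw [hz]; ring
              _ = a ^ (n + 1) * (a * w) := by rw [hw]
              _ = a ^ (n + 2) * w := by ring
        set Rp := Localization.AtPrime p
        set g := algebraMap R Rp with hg
        haveI : IsNoetherianRing Rp :=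
          IsLocalization.isNoetherianRing p.primeCompl Rp inferInstance
        have hmapne : Ideal.map g p ≠ ⊤ := by
          rw [Localization.AtPrime.map_eq_maximalIdeal]
          exact (IsLocalRing.maximalIdeal.isMaximal _).ne_top
        have hbot : (⨅ n : ℕ, Ideal.map g p ^ n) = ⊥ :=
          Ideal.iInf_pow_eq_bot_of_isLocalRing _ hmapne
        have hbu : IsUnit (g b) :=
          IsLocalization.map_units Rp (⟨b, hbp⟩ : p.primeCompl)
        have hgt : g t ∈ (⨅ n : ℕ, Ideal.map g p ^ n) := by
          rw [Ideal.mem_iInf]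
          intro n
          obtain ⟨z, hzq, hz⟩ := seq n
          set c : Rp := ↑(hbu.unit⁻¹) with hc
          have hbc : g b * c = 1 := hbu.mul_val_inv
          have heq : g t = a ^ (n + 1) • (g z * c ^ (n + 1)) := by
            have h1 : (g b) ^ (n + 1) * c ^ (n + 1) = 1 := by
              rw [← mul_pow, hbc, one_pow]
            calc g t = g t * ((g b) ^ (n + 1) * c ^ (n + 1)) := by rw [h1, mul_one]
              _ = (g t * (g b) ^ (n + 1)) * c ^ (n + 1) := by ring
              _ = g (t * b ^ (n + 1)) * c ^ (n + 1) := by rw [map_mul, map_pow]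
              _ = g (a ^ (n + 1) * z) * c ^ (n + 1) := by rw [hz]
              _ = g (a ^ (n + 1)) * (g z * c ^ (n + 1)) := by rw [map_mul]; ring
              _ = a ^ (n + 1) • (g z * c ^ (n + 1)) := by
                rw [Algebra.smul_def]
          rw [heq]
          have hmem' : a ^ (n + 1) • (g z * c ^ (n + 1)) ∈ Ideal.map g p ^ (n + 1) := by
            rw [Algebra.smul_def, map_pow]
            exact Ideal.mul_mem_right _ _
              (Ideal.pow_mem_pow (Ideal.mem_map_of_mem g hap) (n + 1))
          exact Ideal.pow_le_pow_right (Nat.le_succ n) hmem'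
        have hgt0 : g t = 0 := by
          rw [← Ideal.mem_bot, ← hbot]; exact hgt
        obtain ⟨s, hs⟩ := (IsLocalization.map_eq_zero_iff p.primeCompl Rp t).mp hgt0
        have hs0 : (s : R) = 0 := by
          have := (mem_nonZeroDivisors_iff.mp ht).2 (s : R) hs
          exact this
        exact s.2 (hs0 ▸ p.zero_mem)
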